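/- (Neyman orthogonality of the orthogonal loss, Lemma 3.1.) Suppose Y, T : Ω → ℝ are random variables, r_o, t_o : E → ℝ are bounded measurable functions such that E[Y | X] = r_o(X)·t_o(X) almost surely and E[T | X] = t_o(X) almost surely, and all expectations below are finite. Then for all bounded measurable functions r, 𝔯, t : E → ℝ, E[ 2·(−Y + T·r_o(X))·(t(X) − t_o(X))·(r(X) − r_o(X)) + 2·(T·t_o(X) − t_o(X)²)·(𝔯(X) − r_o(X))·(r(X) − r_o(X)) ] = 0. Equivalently, the mixed directional derivative D_g D_r L^ortho(r_o, g_o)[r − r_o, g − g_o] of the population loss L^ortho(r; 𝔯, t) = E[(Y − (T − t(X))·𝔯(X) − r(X)·t(X))²] vanishes at the true nuisance pair g_o = (r_o, t_o) in all directions (r − r_o, g − g_o). -/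

import Mathlib

open MeasureTheory

private lemma bdd_mul' {E : Type*} {f g : E → ℝ}
    (hf : ∃ C, ∀ x, |f x| ≤ C) (hg : ∃ C, ∀ x, |g x| ≤ C) :
    ∃ C, ∀ x, |f x * g x| ≤ C := by
  obtain ⟨Cf, hf⟩ := hf; obtain ⟨Cg, hg⟩ := hg
  refine ⟨max Cf 0 * max Cg 0, fun x => ?_⟩
  rw [abs_mul]
  exact mul_le_mul ((hf x).trans (le_max_left _ _)) ((hg x).trans (le_max_left _ _))
    (abs_nonneg _) (le_max_right _ _)

private lemma bdd_add' {E : Type*} {f g : E → ℝ}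
    (hf : ∃ C, ∀ x, |f x| ≤ C) (hg : ∃ C, ∀ x, |g x| ≤ C) :
    ∃ C, ∀ x, |f x + g x| ≤ C := by
  obtain ⟨Cf, hf⟩ := hf; obtain ⟨Cg, hg⟩ := hg
  exact ⟨Cf + Cg, fun x => (abs_add_le _ _).trans (add_le_add (hf x) (hg x))⟩

private lemma bdd_sub' {E : Type*} {f g : E → ℝ}
    (hf : ∃ C, ∀ x, |f x| ≤ C) (hg : ∃ C, ∀ x, |g x| ≤ C) :
    ∃ C, ∀ x, |f x - g x| ≤ C := by
  obtain ⟨Cf, hf⟩ := hf; obtain ⟨Cg, hg⟩ := hg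
  exact ⟨Cf + Cg, fun x => (abs_sub _ _).trans (add_le_add (hf x) (hg x))⟩

private lemma bdd_cmul' {E : Type*} (k : ℝ) {f : E → ℝ}
    (hf : ∃ C, ∀ x, |f x| ≤ C) : ∃ C, ∀ x, |k * f x| ≤ C := by
  obtain ⟨Cf, hf⟩ := hf
  exact ⟨|k| * Cf, fun x => by
    rw [abs_mul]; exact mul_le_mul_of_nonneg_left (hf x) (abs_nonneg _)⟩

private lemma pullout_integral
    {Ω : Type*} [MeasurableSpace Ω] {μ : Measure Ω} [IsProbabilityMeasure μ]
    {E : Type*} [mE : MeasurableSpace E] (X : Ω → E) (hX : Measurable X)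
    (Z : Ω → ℝ) (hZint : Integrable Z μ)
    (φ g : E → ℝ) (hg : Measurable g) (hgB : ∃ C, ∀ x, |g x| ≤ C)
    (hcond : μ[Z | MeasurableSpace.comap X mE] =ᵐ[μ] fun ω => φ (X ω)) :
    ∫ ω, Z ω * g (X ω) ∂μ = ∫ ω, φ (X ω) * g (X ω) ∂μ := by
  have hm : MeasurableSpace.comap X mE ≤ _ := hX.comap_le
  have hXm : Measurable[MeasurableSpace.comap X mE] X := fun s hs => ⟨s, hs, rfl⟩
  have hgX : StronglyMeasurable[MeasurableSpace.comap X mE] (fun ω => g (X ω)) :=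
    (hg.comp hXm).stronglyMeasurable
  have hgB' : ∃ C, ∀ ω, ‖g (X ω)‖ ≤ C := by
    obtain ⟨C, hC⟩ := hgB; exact ⟨C, fun ω => by simpa using hC (X ω)⟩
  have hZg : Integrable (fun ω => g (X ω) * Z ω) μ :=
    hZint.bdd_mul (hgX.mono hm).aestronglyMeasurable (Filter.Eventually.of_forall hgB'.choose_spec)
  have h1 : μ[(fun ω => g (X ω)) * Z | MeasurableSpace.comap X mE]
      =ᵐ[μ] (fun ω => g (X ω)) * μ[Z | MeasurableSpace.comap X mE] :=
    condExp_mul_of_stronglyMeasurable_left hgX hZg hZint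
  calc ∫ ω, Z ω * g (X ω) ∂μ = ∫ ω, ((fun ω => g (X ω)) * Z) ω ∂μ := by
        simp [mul_comm]
    _ = ∫ ω, (μ[(fun ω => g (X ω)) * Z | MeasurableSpace.comap X mE]) ω ∂μ :=
        (integral_condExp hm).symm
    _ = ∫ ω, φ (X ω) * g (X ω) ∂μ := by
        refine integral_congr_ae ?_
        filter_upwards [h1, hcond] with ω h1 h2
        simp only [Pi.mul_apply] at h1 ⊢
        rw [h1, h2]; ring

private lemma integrable_bdd_comp
    {Ω : Type*} [MeasurableSpace Ω] {μ : Measure Ω} [IsProbabilityMeasure μ]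
    {E : Type*} [mE : MeasurableSpace E] {X : Ω → E} (hX : Measurable X)
    {h : E → ℝ} (hh : Measurable h) (hB : ∃ C, ∀ x, |h x| ≤ C) :
    Integrable (fun ω => h (X ω)) μ := by
  obtain ⟨C, hC⟩ := hB
  exact (integrable_const C).mono' ((hh.comp hX)).aestronglyMeasurable
    (Filter.Eventually.of_forall fun ω => by simpa using hC (X ω))

/-- **Neyman orthogonality of the orthogonal loss (Lemma 3.1).**
If `E[Y | X] = r_o(X) * t_o(X)` a.s. and `E[T | X] = t_o(X)` a.s., with `r_o, t_o` bounded
measurable, then for all bounded measurable `r, 𝔯, t` the mixed directional derivative of the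
orthogonal population loss vanishes:
`E[2(-Y + T r_o(X))(t(X) - t_o(X))(r(X) - r_o(X))
   + 2(T t_o(X) - t_o(X)^2)(𝔯(X) - r_o(X))(r(X) - r_o(X))] = 0`. -/
theorem neyman_orthogonality_ortho_loss
    {Ω : Type*} [MeasurableSpace Ω] {μ : Measure Ω} [IsProbabilityMeasure μ]
    {E : Type*} [mE : MeasurableSpace E] (X : Ω → E) (hX : Measurable X)
    (Y T : Ω → ℝ) (hY : Measurable Y) (hT : Measurable T)
    (hYint : Integrable Y μ) (hTint : Integrable T μ)
    (r_o t_o : E → ℝ) (hro : Measurable r_o) (hto : Measurable t_o)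
    (hroB : ∃ C, ∀ x, |r_o x| ≤ C) (htoB : ∃ C, ∀ x, |t_o x| ≤ C)
    (hYcond : μ[Y | MeasurableSpace.comap X mE] =ᵐ[μ]
      fun ω => r_o (X ω) * t_o (X ω))
    (hTcond : μ[T | MeasurableSpace.comap X mE] =ᵐ[μ]
      fun ω => t_o (X ω))
    (r 𝔯 t : E → ℝ) (hr : Measurable r) (h𝔯 : Measurable 𝔯) (ht : Measurable t)
    (hrB : ∃ C, ∀ x, |r x| ≤ C) (h𝔯B : ∃ C, ∀ x, |𝔯 x| ≤ C) (htB : ∃ C, ∀ x, |t x| ≤ C)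
    (hint : Integrable (fun ω =>
      2 * (-Y ω + T ω * r_o (X ω)) * (t (X ω) - t_o (X ω)) * (r (X ω) - r_o (X ω)) +
      2 * (T ω * t_o (X ω) - t_o (X ω) ^ 2) * (𝔯 (X ω) - r_o (X ω)) * (r (X ω) - r_o (X ω))) μ) :
    ∫ ω, (2 * (-Y ω + T ω * r_o (X ω)) * (t (X ω) - t_o (X ω)) * (r (X ω) - r_o (X ω)) +
      2 * (T ω * t_o (X ω) - t_o (X ω) ^ 2) * (𝔯 (X ω) - r_o (X ω)) * (r (X ω) - r_o (X ω)))
      ∂μ = 0 := by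
  -- decomposition functions
  set a : E → ℝ := fun x => (-2) * ((t x - t_o x) * (r x - r_o x)) with ha_def
  set b : E → ℝ := fun x => 2 * (r_o x * ((t x - t_o x) * (r x - r_o x))) +
      2 * (t_o x * ((𝔯 x - r_o x) * (r x - r_o x))) with hb_def
  set c : E → ℝ := fun x => (-2) * (t_o x * (t_o x * ((𝔯 x - r_o x) * (r x - r_o x)))) with hc_def
  have hrr : ∃ C, ∀ x, |(t x - t_o x) * (r x - r_o x)| ≤ C :=
    bdd_mul' (bdd_sub' htB htoB) (bdd_sub' hrB hroB)
  have h𝔯r : ∃ C, ∀ x, |(𝔯 x - r_o x) * (r x - r_o x)| ≤ C :=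
    bdd_mul' (bdd_sub' h𝔯B hroB) (bdd_sub' hrB hroB)
  have haB : ∃ C, ∀ x, |a x| ≤ C := bdd_cmul' _ hrr
  have hbB : ∃ C, ∀ x, |b x| ≤ C :=
    bdd_add' (bdd_cmul' _ (bdd_mul' hroB hrr)) (bdd_cmul' _ (bdd_mul' htoB h𝔯r))
  have hcB : ∃ C, ∀ x, |c x| ≤ C := bdd_cmul' _ (bdd_mul' htoB (bdd_mul' htoB h𝔯r))
  have ham : Measurable a := by unfold a; fun_prop
  have hbm : Measurable b := by unfold b; fun_prop
  have hcm : Measurable c := by unfold c; fun_prop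
  -- integrability of each piece
  have haB' : ∃ C, ∀ ω, ‖a (X ω)‖ ≤ C := by
    obtain ⟨C, hC⟩ := haB; exact ⟨C, fun ω => by simpa using hC (X ω)⟩
  have hbB' : ∃ C, ∀ ω, ‖b (X ω)‖ ≤ C := by
    obtain ⟨C, hC⟩ := hbB; exact ⟨C, fun ω => by simpa using hC (X ω)⟩
  have hXm : Measurable (fun ω => a (X ω)) := ham.comp hX
  have hYa : Integrable (fun ω => Y ω * a (X ω)) μ :=
    (hYint.bdd_mul (ham.comp hX).aestronglyMeasurable (Filter.Eventually.of_forall haB'.choose_spec)).congr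
      (Filter.Eventually.of_forall fun ω => mul_comm _ _)
  have hTb : Integrable (fun ω => T ω * b (X ω)) μ :=
    (hTint.bdd_mul (hbm.comp hX).aestronglyMeasurable (Filter.Eventually.of_forall hbB'.choose_spec)).congr
      (Filter.Eventually.of_forall fun ω => mul_comm _ _)
  have hc : Integrable (fun ω => c (X ω)) μ := integrable_bdd_comp hX hcm hcB
  -- rewrite the integrand
  have hdecomp : (fun ω =>
      2 * (-Y ω + T ω * r_o (X ω)) * (t (X ω) - t_o (X ω)) * (r (X ω) - r_o (X ω)) +
      2 * (T ω * t_o (X ω) - t_o (X ω) ^ 2) * (𝔯 (X ω) - r_o (X ω)) * (r (X ω) - r_o (X ω)))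
      = fun ω => Y ω * a (X ω) + T ω * b (X ω) + c (X ω) := by
    funext ω; simp only [ha_def, hb_def, hc_def]; ring
  have hsum : Integrable (fun ω => Y ω * a (X ω) + T ω * b (X ω)) μ := hYa.add hTb
  rw [hdecomp, integral_add hsum hc, integral_add hYa hTb,
    pullout_integral X hX Y hYint (fun x => r_o x * t_o x) a ham haB hYcond,
    pullout_integral X hX T hTint t_o b hbm hbB hTcond]
  have h1 : Integrable (fun ω => r_o (X ω) * t_o (X ω) * a (X ω)) μ :=
    integrable_bdd_comp hX (by fun_prop) (bdd_mul' (bdd_mul' hroB htoB) haB)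
  have h2 : Integrable (fun ω => t_o (X ω) * b (X ω)) μ :=
    integrable_bdd_comp hX (by fun_prop) (bdd_mul' htoB hbB)
  have h12 : Integrable (fun ω => r_o (X ω) * t_o (X ω) * a (X ω) + t_o (X ω) * b (X ω)) μ :=
    h1.add h2
  rw [← integral_add h1 h2, ← integral_add h12 hc]
  have : (fun ω => r_o (X ω) * t_o (X ω) * a (X ω) + t_o (X ω) * b (X ω) + c (X ω))
      = fun _ => (0 : ℝ) := by
    funext ω; simp only [ha_def, hb_def, hc_def]; ring
  rw [this, integral_zero]
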